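/- Let 0 < μ ≤ 1/2 and define ω₀ = 0, ω_m = μ / sqrt(1 - ω_{m-1}²). Then ω_m = sqrt(μ) · sqrt(U_{m-1}(1/(2μ)) / U_m(1/(2μ))) for all m ≥ 1, where U_k is the k-th Chebyshev polynomial of the second kind. -/

import Mathlib

lemma U_eval_pos (x : ℝ) (hx : 1 ≤ x) : ∀ n : ℕ,
    1 ≤ (Polynomial.Chebyshev.U ℝ n).eval x ∧
    (Polynomial.Chebyshev.U ℝ n).eval x ≤ (Polynomial.Chebyshev.U ℝ (n+1:ℕ)).eval x := by
  intro n
  induction n with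
  | zero => simp [Polynomial.Chebyshev.U_zero, Polynomial.Chebyshev.U_one]; linarith
  | succ k ih =>
    obtain ⟨h1, h2⟩ := ih
    have hrec := Polynomial.Chebyshev.U_add_two ℝ (k : ℤ)
    have : (Polynomial.Chebyshev.U ℝ ((k:ℤ)+2)).eval x
        = 2 * x * (Polynomial.Chebyshev.U ℝ ((k:ℤ)+1)).eval x - (Polynomial.Chebyshev.U ℝ k).eval x := by
      rw [hrec]; simp
    have hkey : (Polynomial.Chebyshev.U ℝ ((k+1:ℕ)+1:ℕ)).eval x
        = 2 * x * (Polynomial.Chebyshev.U ℝ (k+1:ℕ)).eval x - (Polynomial.Chebyshev.U ℝ (k:ℕ)).eval x := by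
      push_cast; push_cast at this; convert this using 3; ring
    constructor
    · linarith
    · rw [hkey]; nlinarith

noncomputable def omegaSeq (μ : ℝ) : ℕ → ℝ
  | 0 => 0
  | m + 1 => μ / Real.sqrt (1 - (omegaSeq μ m) ^ 2)

lemma aux (μ : ℝ) (hμ0 : 0 < μ) (hμ : μ ≤ 1 / 2) : ∀ k : ℕ,
    omegaSeq μ (k+1) = Real.sqrt μ *
      Real.sqrt ((Polynomial.Chebyshev.U ℝ (k:ℕ)).eval (1/(2*μ)) /
        (Polynomial.Chebyshev.U ℝ (k+1:ℕ)).eval (1/(2*μ))) := by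
  set x := 1/(2*μ) with hxdef
  have hx : 1 ≤ x := by rw [hxdef]; rw [le_div_iff₀ (by linarith)]; linarith
  have htwox : 2 * x = 1 / μ := by rw [hxdef]; field_simp
  intro k
  induction k with
  | zero =>
    have h1 : (Polynomial.Chebyshev.U ℝ (0:ℕ)).eval x = 1 := by
      norm_num [Polynomial.Chebyshev.U_zero]
    have h2 : (Polynomial.Chebyshev.U ℝ (1:ℕ)).eval x = 1/μ := by
      norm_num [Polynomial.Chebyshev.U_one]; rw [htwox]; norm_num
    simp only [omegaSeq, h1, h2]
    norm_num
    exact (Real.mul_self_sqrt hμ0.le).symm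
  | succ k ih =>
    have hb := (U_eval_pos x hx k).1
    have hc := (U_eval_pos x hx (k+1)).1
    have hd := (U_eval_pos x hx (k+2)).1
    set a := (Polynomial.Chebyshev.U ℝ (k:ℕ)).eval x
    set b := (Polynomial.Chebyshev.U ℝ (k+1:ℕ)).eval x
    set c := (Polynomial.Chebyshev.U ℝ (k+2:ℕ)).eval x
    have hrec : c = 2 * x * b - a := by
      have := Polynomial.Chebyshev.U_add_two ℝ (k : ℤ)
      have h : (Polynomial.Chebyshev.U ℝ ((k:ℤ)+2)).eval x
          = 2 * x * (Polynomial.Chebyshev.U ℝ ((k:ℤ)+1)).eval x - (Polynomial.Chebyshev.U ℝ (k:ℤ)).eval x := by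
        rw [this]; simp
      show (Polynomial.Chebyshev.U ℝ ((k+2:ℕ):ℤ)).eval x = _
      push_cast
      convert h using 3; simp [b]
    have hμc : μ * c = b - μ * a := by
      rw [hrec]; have : μ * (2*x) = 1 := by rw [htwox]; field_simp
      nlinarith
    have hsq : omegaSeq μ (k+1) ^ 2 = μ * (a / b) := by
      rw [ih, mul_pow, Real.sq_sqrt hμ0.le, Real.sq_sqrt (by positivity)]
    have hstep : (1 : ℝ) - omegaSeq μ (k+1) ^ 2 = μ * (c / b) := by
      rw [hsq]; field_simp; linarith
    show μ / Real.sqrt (1 - omegaSeq μ (k+1) ^ 2) = Real.sqrt μ * Real.sqrt (b / c)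
    have hsb : (0:ℝ) < Real.sqrt b := Real.sqrt_pos.2 (by linarith)
    have hsc : (0:ℝ) < Real.sqrt c := Real.sqrt_pos.2 (by linarith)
    have hsμ : (0:ℝ) < Real.sqrt μ := Real.sqrt_pos.2 hμ0
    have hμeq : Real.sqrt μ * Real.sqrt μ = μ := Real.mul_self_sqrt hμ0.le
    rw [hstep, Real.sqrt_mul hμ0.le, Real.sqrt_div (by linarith : (0:ℝ) ≤ c),
      Real.sqrt_div (by linarith : (0:ℝ) ≤ b)]
    field_simp
    linear_combination (-1) * hμeq

theorem stmt_11 (μ : ℝ) (hμ0 : 0 < μ) (hμ : μ ≤ 1 / 2) (m : ℕ) (hm : 1 ≤ m) :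
    omegaSeq μ m =
      Real.sqrt μ *
        Real.sqrt ((Polynomial.Chebyshev.U ℝ (m - 1 : ℕ)).eval (1 / (2 * μ)) /
          (Polynomial.Chebyshev.U ℝ m).eval (1 / (2 * μ))) := by
  obtain ⟨k, rfl⟩ : ∃ k, m = k + 1 := ⟨m - 1, (Nat.succ_pred_eq_of_pos hm).symm⟩
  simpa using aux μ hμ0 hμ k
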